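/- Let X and Y be finite ordinal spaces. The Hasse diagrams H(B_X) and H(B_Y) of the posets of balls (B_X, ⊆) and (B_Y, ⊆) are isomorphic as directed graphs if and only if there exists a bijective ball-preserving mapping f: X → Y (i.e., a bijection f such that for every ball Z ∈ B_X, f(Z) ∈ B_Y, and for every ball W ∈ B_Y, f⁻¹(W) ∈ B_X). -/

import Mathlib

/-- The spectrum of an ordinal space at a point. -/
def SpecAt {X L : Type*} (δ : X → X → L) (c : X) : Set L := {l | ∃ x, δ c x = l}

/-- `S` is a ball of the ordinal space `(X, δ)`: it corresponds to a cut `(A, B)` of the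
spectrum at some center `c` with `A ≠ ∅`. -/
def IsBall {X L : Type*} [LinearOrder L] (δ : X → X → L) (S : Set X) : Prop :=
  ∃ (c : X) (A B : Set L), A ∪ B = SpecAt δ c ∧ A.Nonempty ∧
    (∀ a ∈ A, ∀ b ∈ B, a < b) ∧ S = {x | δ c x ∈ A}

/-- The covering (Hasse-diagram arc) relation of a family of sets ordered by inclusion. -/
def HasseArc {X : Type*} (BX : Set (Set X)) (S T : Set X) : Prop :=
  S ∈ BX ∧ T ∈ BX ∧ S ⊂ T ∧ ∀ U ∈ BX, S ⊆ U → U ⊆ T → U = S ∨ U = T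

section Aux
variable {X L : Type*} [LinearOrder L] [OrderBot L] (δ : X → X → L)

lemma bot_mem_specAt (h0 : ∀ x y, δ x y = ⊥ ↔ x = y) (c : X) : (⊥ : L) ∈ SpecAt δ c :=
  ⟨c, (h0 c c).2 rfl⟩

lemma isBall_singleton (h0 : ∀ x y, δ x y = ⊥ ↔ x = y) (c : X) : IsBall δ {c} := by
  refine ⟨c, {⊥}, SpecAt δ c \ {⊥}, ?_, ⟨⊥, rfl⟩, ?_, ?_⟩
  · ext l
    constructor
    · rintro (h | h)
      · simp only [Set.mem_singleton_iff] at h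
        exact h ▸ bot_mem_specAt δ h0 c
      · exact h.1
    · intro h
      by_cases hl : l = ⊥
      · exact Or.inl (by simp [hl])
      · exact Or.inr ⟨h, hl⟩
  · rintro a ha b hb
    simp only [Set.mem_singleton_iff] at ha
    subst ha
    exact lt_of_le_of_ne bot_le (Ne.symm hb.2)
  · ext x
    simp only [Set.mem_singleton_iff, Set.mem_setOf_eq, h0 c x]
    exact eq_comm

lemma center_mem (h0 : ∀ x y, δ x y = ⊥ ↔ x = y) {c : X} {A B : Set L}
    (hAB : A ∪ B = SpecAt δ c) (hA : A.Nonempty)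
    (hlt : ∀ a ∈ A, ∀ b ∈ B, a < b) : (⊥ : L) ∈ A := by
  have h : (⊥ : L) ∈ A ∪ B := hAB ▸ bot_mem_specAt δ h0 c
  rcases h with h | h
  · exact h
  · obtain ⟨a, ha⟩ := hA
    exact absurd (hlt a ha ⊥ h) (by simp)

lemma ball_nonempty (h0 : ∀ x y, δ x y = ⊥ ↔ x = y) {S : Set X} (hS : IsBall δ S) :
    ∃ c, c ∈ S ∧ {c} ⊆ S ∧ IsBall δ {c} := by
  obtain ⟨c, A, B, hAB, hA, hlt, hSe⟩ := hS
  have hc : c ∈ S := by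
    rw [hSe]
    exact Set.mem_setOf_eq ▸ (by rw [(h0 c c).2 rfl]; exact center_mem δ h0 hAB hA hlt)
  exact ⟨c, hc, Set.singleton_subset_iff.2 hc, isBall_singleton δ h0 c⟩

end Aux

/-- A Hasse-arc-preserving equivalence between finite families of sets is monotone. -/
lemma hasse_mono {X Y : Type*} [Finite X]
    (BX : Set (Set X)) (BY : Set (Set Y))
    (F : {S // S ∈ BX} ≃ {T // T ∈ BY})
    (hF : ∀ S T : {S // S ∈ BX}, HasseArc BX S.1 T.1 ↔ HasseArc BY (F S).1 (F T).1) :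
    ∀ S T : {S // S ∈ BX}, S.1 ⊆ T.1 → (F S).1 ⊆ (F T).1 := by
  intro S T
  generalize hn : (T.1 \ S.1).ncard = n
  induction n using Nat.strong_induction_on generalizing S T with
  | _ n ih =>
    intro hST
    rcases eq_or_ne S T with rfl | hne
    · exact subset_rfl
    have hval : S.1 ≠ T.1 := fun h => hne (Subtype.ext h)
    have hssub : S.1 ⊂ T.1 := ssubset_of_subset_of_ne hST hval
    have hfin : ({U : Set X | U ∈ BX ∧ S.1 ⊆ U ∧ U ⊂ T.1}).Finite := Set.toFinite _
    have hne' : ({U : Set X | U ∈ BX ∧ S.1 ⊆ U ∧ U ⊂ T.1}).Nonempty :=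
      ⟨S.1, S.2, subset_rfl, hssub⟩
    obtain ⟨U, hU, hUmax⟩ := hfin.exists_maximalFor id _ hne'
    obtain ⟨hUB, hSU, hUT⟩ := hU
    have harc : HasseArc BX U T.1 := by
      refine ⟨hUB, T.2, hUT, ?_⟩
      intro V hV hUV hVT
      rcases eq_or_ne V T.1 with h | h
      · exact Or.inr h
      · exact Or.inl (Set.Subset.antisymm (hUmax ⟨hV, hSU.trans hUV, ssubset_of_subset_of_ne hVT h⟩ hUV) hUV)
    have harcY := (hF ⟨U, hUB⟩ T).1 harc
    have h1 : (F ⟨U, hUB⟩).1 ⊆ (F T).1 := harcY.2.2.1.1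
    have h2 : (F S).1 ⊆ (F ⟨U, hUB⟩).1 := by
      refine ih ((U \ S.1).ncard) ?_ S ⟨U, hUB⟩ rfl hSU
      rw [← hn]
      apply Set.ncard_lt_ncard _ (Set.toFinite _)
      constructor
      · exact Set.diff_subset_diff_left hUT.1
      · intro hsub
        obtain ⟨t, htT, htU⟩ := Set.exists_of_ssubset hUT
        have : t ∈ T.1 \ S.1 := ⟨htT, fun hs => htU (hSU hs)⟩
        exact htU (hsub this).1
    exact h2.trans h1

/-- A ball-preserving bijection sends Hasse arcs to Hasse arcs. -/
lemma arc_image {X Y : Type*} (BX : Set (Set X)) (BY : Set (Set Y)) (f : X ≃ Y)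
    (hfw : ∀ S ∈ BX, (f : X → Y) '' S ∈ BY)
    (hbw : ∀ T ∈ BY, (f : X → Y) ⁻¹' T ∈ BX)
    {S T : Set X} (h : HasseArc BX S T) :
    HasseArc BY ((f : X → Y) '' S) ((f : X → Y) '' T) := by
  obtain ⟨hS, hT, hST, hcov⟩ := h
  refine ⟨hfw S hS, hfw T hT, ?_, ?_⟩
  · obtain ⟨t, htT, htS⟩ := Set.exists_of_ssubset hST
    refine ⟨fun _ ⟨x, hx, hfx⟩ => ⟨x, hST.1 hx, hfx⟩, fun hsub => htS ?_⟩
    obtain ⟨s, hs, hes⟩ := hsub ⟨t, htT, rfl⟩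
    rwa [← f.injective hes]
  · intro U hU h1 h2
    have hpre : (f : X → Y) ⁻¹' U ∈ BX := hbw U hU
    have hs1 : S ⊆ (f : X → Y) ⁻¹' U := fun x hx => h1 ⟨x, hx, rfl⟩
    have hs2 : (f : X → Y) ⁻¹' U ⊆ T := by
      intro x hx
      obtain ⟨t, ht, het⟩ := h2 hx
      rwa [← f.injective het]
    rcases hcov _ hpre hs1 hs2 with h | h
    · left
      rw [← Set.image_preimage_eq U f.surjective, h]
    · right
      rw [← Set.image_preimage_eq U f.surjective, h]

theorem hasse_iso_iff_ball_preserving_bijection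
    {X Y LX LY : Type*} [Fintype X] [Fintype Y]
    [LinearOrder LX] [OrderBot LX] [LinearOrder LY] [OrderBot LY]
    (δX : X → X → LX) (δY : Y → Y → LY)
    (hXsurj : Function.Surjective fun p : X × X => δX p.1 p.2)
    (hYsurj : Function.Surjective fun p : Y × Y => δY p.1 p.2)
    (hXs : ∀ x y, δX x y = δX y x) (hX0 : ∀ x y, δX x y = ⊥ ↔ x = y)
    (hYs : ∀ x y, δY x y = δY y x) (hY0 : ∀ x y, δY x y = ⊥ ↔ x = y) :
    (∃ F : {S : Set X // IsBall δX S} ≃ {T : Set Y // IsBall δY T},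
        ∀ S T : {S : Set X // IsBall δX S},
          HasseArc {S' | IsBall δX S'} S.1 T.1 ↔
            HasseArc {T' | IsBall δY T'} (F S).1 (F T).1)
    ↔ (∃ f : X ≃ Y,
        (∀ S : Set X, IsBall δX S → IsBall δY ((f : X → Y) '' S)) ∧
        (∀ T : Set Y, IsBall δY T → IsBall δX ((f : X → Y) ⁻¹' T))) := by
  constructor
  · rintro ⟨F, hF⟩
    have hmono : ∀ S T : {S : Set X // IsBall δX S}, S.1 ⊆ T.1 → (F S).1 ⊆ (F T).1 :=
      hasse_mono {S' | IsBall δX S'} {T' | IsBall δY T'} F hF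
    have hF' : ∀ S T : {T : Set Y // IsBall δY T},
        HasseArc {T' | IsBall δY T'} S.1 T.1 ↔
          HasseArc {S' | IsBall δX S'} (F.symm S).1 (F.symm T).1 := by
      intro S T
      rw [hF (F.symm S) (F.symm T), F.apply_symm_apply, F.apply_symm_apply]
    have hmono' : ∀ S T : {T : Set Y // IsBall δY T}, S.1 ⊆ T.1 →
        (F.symm S).1 ⊆ (F.symm T).1 :=
      hasse_mono {T' | IsBall δY T'} {S' | IsBall δX S'} F.symm hF'
    have key : ∀ x : X, ∃ y : Y, (F ⟨{x}, isBall_singleton δX hX0 x⟩).1 = {y} := by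
      intro x
      set Sx : {S : Set X // IsBall δX S} := ⟨{x}, isBall_singleton δX hX0 x⟩
      obtain ⟨c, hc, hcs, hcball⟩ := ball_nonempty δY hY0 (F Sx).2
      refine ⟨c, Set.Subset.antisymm ?_ hcs⟩
      have hsub : (F.symm ⟨{c}, hcball⟩).1 ⊆ Sx.1 := by
        have := hmono' ⟨{c}, hcball⟩ (F Sx) hcs
        rwa [F.symm_apply_apply] at this
      obtain ⟨d, hd, _, _⟩ := ball_nonempty δX hX0 (F.symm ⟨{c}, hcball⟩).2
      have hdx : d = x := hsub hd
      have hxmem : Sx.1 ⊆ (F.symm ⟨{c}, hcball⟩).1 := by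
        intro z hz
        have hz' : z = x := hz
        rw [hz', ← hdx]; exact hd
      have heq : Sx = F.symm ⟨{c}, hcball⟩ :=
        Subtype.ext (Set.Subset.antisymm hxmem hsub)
      rw [heq, F.apply_symm_apply]
    have key' : ∀ y : Y, ∃ x : X, (F.symm ⟨{y}, isBall_singleton δY hY0 y⟩).1 = {x} := by
      intro y
      set Ty : {T : Set Y // IsBall δY T} := ⟨{y}, isBall_singleton δY hY0 y⟩
      obtain ⟨c, hc, hcs, hcball⟩ := ball_nonempty δX hX0 (F.symm Ty).2
      refine ⟨c, Set.Subset.antisymm ?_ hcs⟩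
      have hsub : (F ⟨{c}, hcball⟩).1 ⊆ Ty.1 := by
        have := hmono ⟨{c}, hcball⟩ (F.symm Ty) hcs
        rwa [F.apply_symm_apply] at this
      obtain ⟨d, hd, _, _⟩ := ball_nonempty δY hY0 (F ⟨{c}, hcball⟩).2
      have hdy : d = y := hsub hd
      have hymem : Ty.1 ⊆ (F ⟨{c}, hcball⟩).1 := by
        intro z hz
        have hz' : z = y := hz
        rw [hz', ← hdy]; exact hd
      have heq : Ty = F ⟨{c}, hcball⟩ :=
        Subtype.ext (Set.Subset.antisymm hymem hsub)
      rw [heq, F.symm_apply_apply]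
    choose f hf using key
    choose g hg using key'
    have hfg : ∀ y, f (g y) = y := by
      intro y
      have h1 : F ⟨{g y}, isBall_singleton δX hX0 (g y)⟩ =
          ⟨{y}, isBall_singleton δY hY0 y⟩ := by
        have h2 : (⟨{g y}, isBall_singleton δX hX0 (g y)⟩ : {S : Set X // IsBall δX S}) =
            F.symm ⟨{y}, isBall_singleton δY hY0 y⟩ := Subtype.ext (hg y).symm
        rw [h2, F.apply_symm_apply]
      have h3 := hf (g y)
      rw [h1] at h3
      exact Set.singleton_eq_singleton_iff.1 h3.symm
    have hgf : ∀ x, g (f x) = x := by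
      intro x
      have h1 : F.symm ⟨{f x}, isBall_singleton δY hY0 (f x)⟩ =
          ⟨{x}, isBall_singleton δX hX0 x⟩ := by
        have h2 : (⟨{f x}, isBall_singleton δY hY0 (f x)⟩ : {T : Set Y // IsBall δY T}) =
            F ⟨{x}, isBall_singleton δX hX0 x⟩ := Subtype.ext (hf x).symm
        rw [h2, F.symm_apply_apply]
      have h3 := hg (f x)
      rw [h1] at h3
      exact Set.singleton_eq_singleton_iff.1 h3.symm
    refine ⟨⟨f, g, hgf, hfg⟩, ?_, ?_⟩
    · intro S hS
      have himg : f '' S = (F ⟨S, hS⟩).1 := by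
        ext y
        constructor
        · rintro ⟨x, hx, rfl⟩
          have h1 : ({x} : Set X) ⊆ S := Set.singleton_subset_iff.2 hx
          have h2 := hmono ⟨{x}, isBall_singleton δX hX0 x⟩ ⟨S, hS⟩ h1
          rw [hf x] at h2
          exact h2 rfl
        · intro hy
          refine ⟨g y, ?_, hfg y⟩
          have h1 : ({y} : Set Y) ⊆ (F ⟨S, hS⟩).1 := Set.singleton_subset_iff.2 hy
          have h2 := hmono' ⟨{y}, isBall_singleton δY hY0 y⟩ (F ⟨S, hS⟩) h1
          rw [hg y, F.symm_apply_apply] at h2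
          exact h2 rfl
      exact himg ▸ (F ⟨S, hS⟩).2
    · intro T hT
      have himg : (fun x => f x) ⁻¹' T = (F.symm ⟨T, hT⟩).1 := by
        ext x
        constructor
        · intro hx
          have h1 : ({f x} : Set Y) ⊆ T := Set.singleton_subset_iff.2 hx
          have h2 := hmono' ⟨{f x}, isBall_singleton δY hY0 (f x)⟩ ⟨T, hT⟩ h1
          rw [hg (f x)] at h2
          have h3 := h2 rfl
          rwa [hgf x] at h3
        · intro hx
          have h1 : ({x} : Set X) ⊆ (F.symm ⟨T, hT⟩).1 := Set.singleton_subset_iff.2 hx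
          have h2 := hmono ⟨{x}, isBall_singleton δX hX0 x⟩ (F.symm ⟨T, hT⟩) h1
          rw [hf x, F.apply_symm_apply] at h2
          exact h2 rfl
      exact himg ▸ (F.symm ⟨T, hT⟩).2
  · rintro ⟨f, hfw, hbw⟩
    have hfw' : ∀ S ∈ {S' | IsBall δX S'}, (f : X → Y) '' S ∈ {T' | IsBall δY T'} := hfw
    have hbw' : ∀ T ∈ {T' | IsBall δY T'}, (f : X → Y) ⁻¹' T ∈ {S' | IsBall δX S'} := hbw
    refine ⟨⟨fun S => ⟨(f : X → Y) '' S.1, hfw S.1 S.2⟩,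
            fun T => ⟨(f : X → Y) ⁻¹' T.1, hbw T.1 T.2⟩, ?_, ?_⟩, ?_⟩
    · intro S
      exact Subtype.ext (Set.preimage_image_eq S.1 f.injective)
    · intro T
      exact Subtype.ext (Set.image_preimage_eq T.1 f.surjective)
    · intro S T
      constructor
      · exact arc_image _ _ f hfw' hbw'
      · intro h
        have hsw : ∀ T ∈ {T' | IsBall δY T'}, (f.symm : Y → X) '' T ∈ {S' | IsBall δX S'} := by
          intro T hT
          have he : (f.symm : Y → X) '' T = (f : X → Y) ⁻¹' T := by
            rw [Equiv.image_eq_preimage_symm, Equiv.symm_symm]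
          exact he ▸ hbw T hT
        have hsb : ∀ S ∈ {S' | IsBall δX S'},
            (f.symm : Y → X) ⁻¹' S ∈ {T' | IsBall δY T'} := by
          intro S hS
          have he : (f.symm : Y → X) ⁻¹' S = (f : X → Y) '' S :=
            (Equiv.image_eq_preimage_symm f S).symm
          exact he ▸ hfw S hS
        have harc := arc_image _ _ f.symm hsw hsb h
        simpa [Equiv.symm_image_image] using harc
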